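/- Let 0 < α ≤ 1, n > 0, 0 < m ≤ n, and let q be a real number with q₁ < q < q₂, where q₁ := −n + √(n² + α·m²) and q₂ := (1 − (α+1)^(−1/2))·(n + ((α+1)^(1/2) − 1)·m). Then there exists exactly one r ∈ (0,1) such that 2q²r³ + (2qn − q²)r² − α·m² = 0 and m/r ≤ n + (r−1)·q. -/

import Mathlib

/-- Auxiliary: at a root of the cubic, the admissibility constraint holds. -/
lemma aux_g_nonneg (α n m q s c t r : ℝ)
    (hm0 : 0 < m) (hq0 : 0 < q) (hqn : q < n)
    (hs_sq : s ^ 2 = α + 1) (hs0 : 0 < s) (hc : c = s - 1)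
    (ht : t = c * m / q) (ht0 : 0 < t)
    (hgt : 0 < q * t ^ 2 + (n - q) * t - m)
    (hr0 : 0 < r)
    (hfr : 2 * q ^ 2 * r ^ 3 + (2 * q * n - q ^ 2) * r ^ 2 - α * m ^ 2 = 0) :
    0 ≤ q * r ^ 2 + (n - q) * r - m := by
  by_contra h
  push_neg at h
  -- identity: F r = 2qr·g r + (qr+m)² − (α+1)m², so (qr+m)² > (α+1)m² = (sm)²
  have key2 : (q * r + m) ^ 2 - (s * m) ^ 2 = -(2 * q * r) * (q * r ^ 2 + (n - q) * r - m) := by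
    linear_combination hfr - m ^ 2 * hs_sq
  have h2 : (s * m) ^ 2 ≤ (q * r + m) ^ 2 := by
    nlinarith [mul_pos (mul_pos hq0 hr0) (neg_pos.mpr h)]
  have h3 : s * m ≤ q * r + m := by
    nlinarith [mul_pos hs0 hm0, mul_pos hq0 hr0]
  have h4 : c * m ≤ q * r := by
    have : c * m = s * m - m := by rw [hc]; ring
    linarith
  have ht_le : t ≤ r := by
    rw [ht, div_le_iff₀ hq0]
    linarith [mul_comm q r]
  -- g is increasing on [0, ∞), so 0 < g t ≤ g r, contradicting h
  nlinarith [mul_nonneg (sub_nonneg.mpr ht_le) (by nlinarith : (0:ℝ) ≤ q * (r + t)),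
    mul_nonneg (sub_nonneg.mpr ht_le) (by linarith : (0:ℝ) ≤ n - q)]

/-- Auxiliary: the cubic is strictly monotone on positives, hence has at most one root. -/
lemma aux_unique_root (α n m q y r : ℝ) (hq0 : 0 < q) (hqn : q < n)
    (hy0 : 0 < y) (hr0 : 0 < r)
    (hfy : 2 * q ^ 2 * y ^ 3 + (2 * q * n - q ^ 2) * y ^ 2 - α * m ^ 2 = 0)
    (hfr : 2 * q ^ 2 * r ^ 3 + (2 * q * n - q ^ 2) * r ^ 2 - α * m ^ 2 = 0) :
    y = r := by
  rcases lt_trichotomy y r with hlt | heq | hgt'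
  · exfalso
    nlinarith [mul_pos (mul_pos (mul_pos hq0 hq0) (sub_pos.mpr hlt))
        (by nlinarith : (0:ℝ) < y ^ 2 + y * r + r ^ 2),
      mul_pos (mul_pos hq0 (by linarith : (0:ℝ) < 2 * n - q))
        (mul_pos (sub_pos.mpr hlt) (by linarith : (0:ℝ) < y + r))]
  · exact heq
  · exfalso
    nlinarith [mul_pos (mul_pos (mul_pos hq0 hq0) (sub_pos.mpr hgt'))
        (by nlinarith : (0:ℝ) < y ^ 2 + y * r + r ^ 2),
      mul_pos (mul_pos hq0 (by linarith : (0:ℝ) < 2 * n - q))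
        (mul_pos (sub_pos.mpr hgt') (by linarith : (0:ℝ) < y + r))]

/-- For `q₁ < q < q₂` there is a unique admissible volume fraction `r ∈ (0,1)`. -/
theorem unique_volume_fraction
    (α n m q : ℝ)
    (hα0 : 0 < α) (hα1 : α ≤ 1) (hn : 0 < n) (hm0 : 0 < m) (hmn : m ≤ n)
    (hq1 : -n + Real.sqrt (n ^ 2 + α * m ^ 2) < q)
    (hq2 : q < (1 - 1 / Real.sqrt (α + 1)) * (n + (Real.sqrt (α + 1) - 1) * m)) :
    ∃! r : ℝ, r ∈ Set.Ioo (0 : ℝ) 1 ∧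
      2 * q ^ 2 * r ^ 3 + (2 * q * n - q ^ 2) * r ^ 2 - α * m ^ 2 = 0 ∧
      m / r ≤ n + (r - 1) * q := by
  set s : ℝ := Real.sqrt (α + 1) with hs_def
  have hs0 : 0 < s := Real.sqrt_pos.mpr (by linarith)
  have hs_sq : s ^ 2 = α + 1 := Real.sq_sqrt (by linarith)
  have hs1 : 1 < s := by nlinarith
  set c : ℝ := s - 1 with hc_def
  have hc0 : 0 < c := by simp [hc_def]; linarith
  have hc_sq : c ^ 2 + 2 * c = α := by simp [hc_def]; nlinarith
  clear_value s c
  -- q > 0 and f(1) > 0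
  have hR0 : (0:ℝ) ≤ n ^ 2 + α * m ^ 2 := by nlinarith
  have hRsq : Real.sqrt (n ^ 2 + α * m ^ 2) ^ 2 = n ^ 2 + α * m ^ 2 :=
    Real.sq_sqrt hR0
  have hRnn : 0 ≤ Real.sqrt (n ^ 2 + α * m ^ 2) := Real.sqrt_nonneg _
  have hroot : n < Real.sqrt (n ^ 2 + α * m ^ 2) :=
    (Real.lt_sqrt hn.le).mpr (by nlinarith [mul_pos hα0 (pow_pos hm0 2)])
  have hq0 : 0 < q := by linarith
  have hf1 : 0 < q ^ 2 + 2 * q * n - α * m ^ 2 := by nlinarith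
  -- key inequality from hq2 : q * s < c * (n + c * m)
  have hkey : q * s < c * (n + c * m) := by
    have h1 : (1 - 1 / s) * (n + c * m) = c * (n + c * m) / s := by
      rw [hc_def]
      field_simp
      try ring
    rw [h1] at hq2
    exact (lt_div_iff₀ hs0).mp hq2
  -- q < n
  have hqn : q < n := by nlinarith [mul_pos hc0 hm0, mul_pos hc0 hn]
  -- the value of g at t := c*m/q is positive
  set t : ℝ := c * m / q with ht_def
  have ht0 : 0 < t := div_pos (mul_pos hc0 hm0) hq0
  clear_value t
  have hgt : 0 < q * t ^ 2 + (n - q) * t - m := by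
    have h2 : q * t ^ 2 + (n - q) * t - m = m / q * (c * (n + c * m) - q * s) := by
      rw [ht_def]
      field_simp
      linear_combination (-q) * hc_def
    rw [h2]
    exact mul_pos (div_pos hm0 hq0) (by linarith)
  -- IVT: root of the cubic in (0,1)
  have hcont : ContinuousOn
      (fun r : ℝ => 2 * q ^ 2 * r ^ 3 + (2 * q * n - q ^ 2) * r ^ 2 - α * m ^ 2)
      (Set.Icc (0:ℝ) 1) := by
    apply Continuous.continuousOn
    fun_prop
  have hF0 : (fun r : ℝ => 2 * q ^ 2 * r ^ 3 + (2 * q * n - q ^ 2) * r ^ 2 - α * m ^ 2) 0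
      < 0 := by
    norm_num
    exact mul_pos hα0 (pow_pos hm0 2)
  have hF1 : (0:ℝ) <
      (fun r : ℝ => 2 * q ^ 2 * r ^ 3 + (2 * q * n - q ^ 2) * r ^ 2 - α * m ^ 2) 1 := by
    norm_num
    linarith [hf1]
  obtain ⟨r, hrmem, hfr⟩ := intermediate_value_Ioo (by norm_num : (0:ℝ) ≤ 1) hcont
    (Set.mem_Ioo.mpr ⟨hF0, hF1⟩)
  obtain ⟨hr0, hr1⟩ := hrmem
  have hfr' : 2 * q ^ 2 * r ^ 3 + (2 * q * n - q ^ 2) * r ^ 2 - α * m ^ 2 = 0 := hfr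
  have hgr : 0 ≤ q * r ^ 2 + (n - q) * r - m :=
    aux_g_nonneg α n m q s c t r hm0 hq0 hqn hs_sq hs0 hc_def ht_def ht0 hgt hr0 hfr'
  have hconstr : m / r ≤ n + (r - 1) * q := by
    rw [div_le_iff₀ hr0, show (n + (r - 1) * q) * r = q * r ^ 2 + (n - q) * r from by ring]
    linarith [hgr]
  refine ⟨r, ⟨⟨hr0, hr1⟩, hfr', hconstr⟩, ?_⟩
  rintro y ⟨⟨hy0, hy1⟩, hfy, -⟩
  exact aux_unique_root α n m q y r hq0 hqn hy0 hr0 hfy hfr'
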